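/- The Boolean algebra B_{ℝ²} of cubical areas of ℝ², regarded as a join-semilattice with zero, together with the bimorphism (a,b) ↦ a × b from B_ℝ × B_ℝ, satisfies the universal property of the tensor product B_ℝ ⊗ B_ℝ in the category of semilattices with zero: for every semilattice X with zero and every bimorphism f : B_ℝ × B_ℝ → X there is a unique zero-preserving semilattice morphism h : B_{ℝ²} → X with h(a × b) = f(a,b). -/

import Mathlib

open Set

/-- Membership in `B_ℝ`: a finite union of intervals (order-convex subsets) of `ℝ`. -/
def FinUnionIntervals (X : Set ℝ) : Prop :=
  ∃ 𝒮 : Finset (Set ℝ), (∀ I ∈ 𝒮, I.OrdConnected) ∧ ⋃₀ ↑𝒮 = X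

/-- Membership in `B_{ℝ²}`: a finite union of rectangles (products of two intervals). -/
def CubicalArea2 (S : Set (ℝ × ℝ)) : Prop :=
  ∃ 𝒮 : Finset (Set (ℝ × ℝ)),
    (∀ C ∈ 𝒮, ∃ a b : Set ℝ, a.OrdConnected ∧ b.OrdConnected ∧ C = a ×ˢ b) ∧
    ⋃₀ ↑𝒮 = S

/-- The join-semilattice with zero `B_{ℝ²}` of cubical areas of `ℝ²`. -/
def BA2 : Type := {S : Set (ℝ × ℝ) // CubicalArea2 S}

instance : PartialOrder BA2 := Subtype.partialOrder _

instance : SemilatticeSup BA2 where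
  sup S T := ⟨S.1 ∪ T.1, by
    letI : DecidableEq (Set (ℝ × ℝ)) := Classical.decEq _
    obtain ⟨𝒮, h𝒮, hu⟩ := S.2
    obtain ⟨𝒯, h𝒯, hv⟩ := T.2
    refine ⟨𝒮 ∪ 𝒯, ?_, ?_⟩
    · intro C hC
      rcases Finset.mem_union.mp hC with h | h
      exacts [h𝒮 C h, h𝒯 C h]
    · rw [Finset.coe_union, Set.sUnion_union, hu, hv]⟩
  le_sup_left S T := Set.subset_union_left
  le_sup_right S T := Set.subset_union_right
  sup_le S T U h1 h2 := Set.union_subset h1 h2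

instance : OrderBot BA2 where
  bot := ⟨∅, ⟨∅, by simp, by simp⟩⟩
  bot_le S := Set.empty_subset _

-- AUX START
section Aux

lemma fui_ordConn {s : Set ℝ} (h : s.OrdConnected) : FinUnionIntervals s :=
  ⟨{s}, by simpa using h, by simp⟩

lemma fui_empty : FinUnionIntervals (∅ : Set ℝ) := ⟨∅, by simp, by simp⟩

lemma fui_union {a b : Set ℝ} (ha : FinUnionIntervals a) (hb : FinUnionIntervals b) :
    FinUnionIntervals (a ∪ b) := by
  classical
  obtain ⟨𝒮, h𝒮, hu⟩ := ha
  obtain ⟨𝒯, h𝒯, hv⟩ := hb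
  exact ⟨𝒮 ∪ 𝒯, fun I hI => ((Finset.mem_union.mp hI).elim (h𝒮 I) (h𝒯 I)),
    by rw [Finset.coe_union, Set.sUnion_union, hu, hv]⟩

def uList (l : List (Set ℝ)) : Set ℝ := l.foldr (· ∪ ·) ∅

@[simp] lemma uList_nil : uList [] = ∅ := rfl
@[simp] lemma uList_cons (s : Set ℝ) (l : List (Set ℝ)) : uList (s :: l) = s ∪ uList l := rfl

lemma fui_uList {l : List (Set ℝ)} (h : ∀ s ∈ l, Set.OrdConnected s) :
    FinUnionIntervals (uList l) := by
  induction l with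
  | nil => exact fui_empty
  | cons s l ih =>
      exact fui_union (fui_ordConn (h s (by simp))) (ih fun t ht => h t (by simp [ht]))

lemma fui_list {a : Set ℝ} (ha : FinUnionIntervals a) :
    ∃ l : List (Set ℝ), (∀ s ∈ l, Set.OrdConnected s) ∧ uList l = a := by
  obtain ⟨𝒮, h1, h2⟩ := ha
  refine ⟨𝒮.toList, fun s hs => h1 s (Finset.mem_toList.mp hs), ?_⟩
  rw [← h2]
  have : ∀ l : List (Set ℝ), uList l = ⋃₀ {s | s ∈ l} := by
    intro l
    induction l with
    | nil => simp
    | cons s l ih =>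
        rw [uList_cons, ih]
        ext x
        simp [List.mem_cons, or_and_right, exists_or]
  rw [this]
  congr 1
  ext s
  simp

def rList (L : List (Set ℝ × Set ℝ)) : Set (ℝ × ℝ) :=
  L.foldr (fun p s => p.1 ×ˢ p.2 ∪ s) ∅

@[simp] lemma rList_nil : rList [] = ∅ := rfl
@[simp] lemma rList_cons (p : Set ℝ × Set ℝ) (L : List (Set ℝ × Set ℝ)) :
    rList (p :: L) = p.1 ×ˢ p.2 ∪ rList L := rfl

lemma rList_append (L M : List (Set ℝ × Set ℝ)) :
    rList (L ++ M) = rList L ∪ rList M := by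
  induction L with
  | nil => simp
  | cons p L ih => simp [ih, Set.union_assoc]

lemma mem_rList {x : ℝ × ℝ} {L : List (Set ℝ × Set ℝ)} :
    x ∈ rList L ↔ ∃ p ∈ L, x ∈ p.1 ×ˢ p.2 := by
  induction L with
  | nil => simp
  | cons p L ih => simp [ih]

def vList {X : Type} [SemilatticeSup X] [OrderBot X] (f : Set ℝ → Set ℝ → X)
    (L : List (Set ℝ × Set ℝ)) : X :=
  L.foldr (fun p x => f p.1 p.2 ⊔ x) ⊥

variable {X : Type} [SemilatticeSup X] [OrderBot X] {f : Set ℝ → Set ℝ → X}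

@[simp] lemma vList_nil : vList f [] = ⊥ := rfl
@[simp] lemma vList_cons (p : Set ℝ × Set ℝ) (L : List (Set ℝ × Set ℝ)) :
    vList f (p :: L) = f p.1 p.2 ⊔ vList f L := rfl

lemma vList_append (L M : List (Set ℝ × Set ℝ)) :
    vList f (L ++ M) = vList f L ⊔ vList f M := by
  induction L with
  | nil => simp
  | cons p L ih => simp [ih, sup_assoc]

lemma vList_le {x : X} : ∀ L : List (Set ℝ × Set ℝ), (∀ p ∈ L, f p.1 p.2 ≤ x) →
    vList f L ≤ x := by
  intro L
  induction L with
  | nil => intro _; simp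
  | cons p L ih =>
      intro h
      exact sup_le (h p (by simp)) (ih fun q hq => h q (by simp [hq]))

lemma f_mono
    (hfa : ∀ a a' b, FinUnionIntervals a → FinUnionIntervals a' → FinUnionIntervals b →
      f (a ∪ a') b = f a b ⊔ f a' b)
    (hfb : ∀ a b b', FinUnionIntervals a → FinUnionIntervals b → FinUnionIntervals b' →
      f a (b ∪ b') = f a b ⊔ f a b')
    {a a' b b' : Set ℝ} (fa : FinUnionIntervals a) (fa' : FinUnionIntervals a')
    (fb : FinUnionIntervals b) (fb' : FinUnionIntervals b')
    (hab : a ⊆ a') (hbb : b ⊆ b') : f a b ≤ f a' b' := by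
  have h1 : f a b ≤ f a' b := by
    have := hfa a a' b fa fa' fb
    rw [Set.union_eq_self_of_subset_left hab] at this
    rw [this]; exact le_sup_left
  have h2 : f a' b ≤ f a' b' := by
    have := hfb a' b b' fa' fb fb'
    rw [Set.union_eq_self_of_subset_left hbb] at this
    rw [this]; exact le_sup_left
  exact h1.trans h2

lemma ordConn_low {c : Set ℝ} : Set.OrdConnected {x | x ∉ c ∧ ∀ y ∈ c, x ≤ y} := by
  constructor
  intro u hu v hv w hw
  refine ⟨fun hwc => hv.1 ?_, fun y hy => le_trans hw.2 (hv.2 y hy)⟩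
  have : w = v := le_antisymm hw.2 (hv.2 w hwc)
  rwa [← this]

lemma ordConn_high {c : Set ℝ} : Set.OrdConnected {x | x ∉ c ∧ ∀ y ∈ c, y ≤ x} := by
  constructor
  intro u hu v hv w hw
  refine ⟨fun hwc => hu.1 ?_, fun y hy => le_trans (hu.2 y hy) hw.1⟩
  have : w = u := le_antisymm (hu.2 w hwc) hw.1
  rwa [← this]

lemma cover_three {c : Set ℝ} (hc : c.OrdConnected) (x : ℝ) :
    x ∈ c ∨ (x ∉ c ∧ ∀ y ∈ c, x ≤ y) ∨ (x ∉ c ∧ ∀ y ∈ c, y ≤ x) := by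
  by_cases hx : x ∈ c
  · exact Or.inl hx
  by_cases hl : ∀ y ∈ c, x ≤ y
  · exact Or.inr (Or.inl ⟨hx, hl⟩)
  push_neg at hl
  obtain ⟨y, hy, hyx⟩ := hl
  refine Or.inr (Or.inr ⟨hx, fun z hz => ?_⟩)
  by_contra hzx
  push_neg at hzx
  exact hx (hc.out hy hz ⟨hyx.le, hzx.le⟩)

end Aux

section Key

variable {X : Type} [SemilatticeSup X] [OrderBot X] {f : Set ℝ → Set ℝ → X}

lemma keyC
    (hb0 : ∀ b, FinUnionIntervals b → f ∅ b = ⊥)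
    (ha0 : ∀ a, FinUnionIntervals a → f a ∅ = ⊥)
    (hfa : ∀ a a' b, FinUnionIntervals a → FinUnionIntervals a' → FinUnionIntervals b →
      f (a ∪ a') b = f a b ⊔ f a' b)
    (hfb : ∀ a b b', FinUnionIntervals a → FinUnionIntervals b → FinUnionIntervals b' →
      f a (b ∪ b') = f a b ⊔ f a b') :
    ∀ L : List (Set ℝ × Set ℝ), (∀ p ∈ L, p.1.OrdConnected ∧ p.2.OrdConnected) →
    ∀ a b : Set ℝ, a.OrdConnected → b.OrdConnected → a ×ˢ b ⊆ rList L →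
    f a b ≤ vList f L := by
  intro L
  induction L with
  | nil =>
      intro _ a b ha hb hsub
      have h0 : a ×ˢ b = ∅ := Set.subset_empty_iff.mp (by simpa using hsub)
      rcases Set.prod_eq_empty_iff.mp h0 with h | h
      · rw [h, hb0 b (fui_ordConn hb)]; exact bot_le
      · rw [h, ha0 a (fui_ordConn ha)]; exact bot_le
  | cons p L ih =>
      intro hG a b ha hb hsub
      obtain ⟨hc, hd⟩ := hG p List.mem_cons_self
      have hG' : ∀ q ∈ L, q.1.OrdConnected ∧ q.2.OrdConnected :=
        fun q hq => hG q (List.mem_cons_of_mem p hq)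
      set cLo : Set ℝ := {x | x ∉ p.1 ∧ ∀ y ∈ p.1, x ≤ y} with hcLo
      set cHi : Set ℝ := {x | x ∉ p.1 ∧ ∀ y ∈ p.1, y ≤ x} with hcHi
      set dLo : Set ℝ := {x | x ∉ p.2 ∧ ∀ y ∈ p.2, x ≤ y} with hdLo
      set dHi : Set ℝ := {x | x ∉ p.2 ∧ ∀ y ∈ p.2, y ≤ x} with hdHi
      have hcLo' : cLo.OrdConnected := ordConn_low
      have hcHi' : cHi.OrdConnected := ordConn_high
      have hdLo' : dLo.OrdConnected := ordConn_low
      have hdHi' : dHi.OrdConnected := ordConn_high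
      -- ord-connectedness of the pieces
      have o1 : (a ∩ cLo).OrdConnected := ha.inter hcLo'
      have o2 : (a ∩ p.1).OrdConnected := ha.inter hc
      have o3 : (a ∩ cHi).OrdConnected := ha.inter hcHi'
      have o4 : (b ∩ dLo).OrdConnected := hb.inter hdLo'
      have o5 : (b ∩ p.2).OrdConnected := hb.inter hd
      have o6 : (b ∩ dHi).OrdConnected := hb.inter hdHi'
      have f1 := fui_ordConn o1
      have f2 := fui_ordConn o2
      have f3 := fui_ordConn o3
      have f4 := fui_ordConn o4
      have f5 := fui_ordConn o5
      have f6 := fui_ordConn o6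
      have fb := fui_ordConn hb
      -- splittings
      have hcov : a = a ∩ cLo ∪ (a ∩ p.1 ∪ a ∩ cHi) := by
        ext x
        simp only [Set.mem_union, Set.mem_inter_iff]
        constructor
        · intro hx
          rcases cover_three hc x with h | h | h
          · exact Or.inr (Or.inl ⟨hx, h⟩)
          · exact Or.inl ⟨hx, h⟩
          · exact Or.inr (Or.inr ⟨hx, h⟩)
        · rintro (⟨hx, _⟩ | ⟨hx, _⟩ | ⟨hx, _⟩) <;> exact hx
      have hcovb : b = b ∩ dLo ∪ (b ∩ p.2 ∪ b ∩ dHi) := by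
        ext x
        simp only [Set.mem_union, Set.mem_inter_iff]
        constructor
        · intro hx
          rcases cover_three hd x with h | h | h
          · exact Or.inr (Or.inl ⟨hx, h⟩)
          · exact Or.inl ⟨hx, h⟩
          · exact Or.inr (Or.inr ⟨hx, h⟩)
        · rintro (⟨hx, _⟩ | ⟨hx, _⟩ | ⟨hx, _⟩) <;> exact hx
      have e1 : f a b = f (a ∩ cLo) b ⊔ (f (a ∩ p.1) b ⊔ f (a ∩ cHi) b) := by
        conv_lhs => rw [hcov]
        rw [hfa _ _ _ f1 (fui_union f2 f3) fb, hfa _ _ _ f2 f3 fb]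
      have e2 : f (a ∩ p.1) b
          = f (a ∩ p.1) (b ∩ dLo) ⊔ (f (a ∩ p.1) (b ∩ p.2) ⊔ f (a ∩ p.1) (b ∩ dHi)) := by
        conv_lhs => rw [hcovb]
        rw [hfb _ _ _ f2 f4 (fui_union f5 f6), hfb _ _ _ f2 f5 f6]
      -- subset facts
      have s1 : (a ∩ cLo) ×ˢ b ⊆ rList L := by
        rintro ⟨x, y⟩ ⟨⟨hxa, hxl⟩, hyb⟩
        rcases hsub (Set.mk_mem_prod hxa hyb) with h | h
        · exact absurd h.1 hxl.1
        · exact h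
      have s2 : (a ∩ cHi) ×ˢ b ⊆ rList L := by
        rintro ⟨x, y⟩ ⟨⟨hxa, hxl⟩, hyb⟩
        rcases hsub (Set.mk_mem_prod hxa hyb) with h | h
        · exact absurd h.1 hxl.1
        · exact h
      have s3 : (a ∩ p.1) ×ˢ (b ∩ dLo) ⊆ rList L := by
        rintro ⟨x, y⟩ ⟨⟨hxa, _⟩, hyb, hyl⟩
        rcases hsub (Set.mk_mem_prod hxa hyb) with h | h
        · exact absurd h.2 hyl.1
        · exact h
      have s4 : (a ∩ p.1) ×ˢ (b ∩ dHi) ⊆ rList L := by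
        rintro ⟨x, y⟩ ⟨⟨hxa, _⟩, hyb, hyl⟩
        rcases hsub (Set.mk_mem_prod hxa hyb) with h | h
        · exact absurd h.2 hyl.1
        · exact h
      have t1 : f (a ∩ cLo) b ≤ vList f L := ih hG' _ _ o1 hb s1
      have t2 : f (a ∩ cHi) b ≤ vList f L := ih hG' _ _ o3 hb s2
      have t3 : f (a ∩ p.1) (b ∩ dLo) ≤ vList f L := ih hG' _ _ o2 o4 s3
      have t4 : f (a ∩ p.1) (b ∩ dHi) ≤ vList f L := ih hG' _ _ o2 o6 s4
      have t5 : f (a ∩ p.1) (b ∩ p.2) ≤ f p.1 p.2 :=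
        f_mono hfa hfb f2 (fui_ordConn hc) f5 (fui_ordConn hd)
          Set.inter_subset_right Set.inter_subset_right
      rw [e1, e2, vList_cons]
      exact sup_le (t1.trans le_sup_right)
        (sup_le
          (sup_le (t3.trans le_sup_right)
            (sup_le (t5.trans le_sup_left) (t4.trans le_sup_right)))
          (t2.trans le_sup_right))

end Key

section Rest

variable {X : Type} [SemilatticeSup X] [OrderBot X] {f : Set ℝ → Set ℝ → X}
variable (hb0 : ∀ b, FinUnionIntervals b → f ∅ b = ⊥)
variable (ha0 : ∀ a, FinUnionIntervals a → f a ∅ = ⊥)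
variable (hfa : ∀ a a' b, FinUnionIntervals a → FinUnionIntervals a' → FinUnionIntervals b →
      f (a ∪ a') b = f a b ⊔ f a' b)
variable (hfb : ∀ a b b', FinUnionIntervals a → FinUnionIntervals b → FinUnionIntervals b' →
      f a (b ∪ b') = f a b ⊔ f a b')

include hb0 ha0 hfa hfb

lemma keyC2 (lb : List (Set ℝ)) (s : Set ℝ) (hs : s.OrdConnected)
    (hlb : ∀ t ∈ lb, Set.OrdConnected t)
    (L : List (Set ℝ × Set ℝ)) (hL : ∀ p ∈ L, p.1.OrdConnected ∧ p.2.OrdConnected)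
    (hsub : s ×ˢ uList lb ⊆ rList L) : f s (uList lb) ≤ vList f L := by
  induction lb with
  | nil =>
      rw [uList_nil, ha0 s (fui_ordConn hs)]; exact bot_le
  | cons t lb ih =>
      have ht := hlb t (by simp)
      have hlb' : ∀ u ∈ lb, Set.OrdConnected u := fun u hu => hlb u (by simp [hu])
      rw [uList_cons,
        hfb s t (uList lb) (fui_ordConn hs) (fui_ordConn ht) (fui_uList hlb')]
      apply sup_le
      · exact keyC hb0 ha0 hfa hfb L hL s t hs ht
          ((Set.prod_mono_right Set.subset_union_left).trans hsub)
      · exact ih hlb' ((Set.prod_mono_right Set.subset_union_right).trans hsub)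

lemma keyC3 (la lb : List (Set ℝ))
    (hla : ∀ t ∈ la, Set.OrdConnected t) (hlb : ∀ t ∈ lb, Set.OrdConnected t)
    (L : List (Set ℝ × Set ℝ)) (hL : ∀ p ∈ L, p.1.OrdConnected ∧ p.2.OrdConnected)
    (hsub : uList la ×ˢ uList lb ⊆ rList L) : f (uList la) (uList lb) ≤ vList f L := by
  induction la with
  | nil =>
      rw [uList_nil, hb0 _ (fui_uList hlb)]; exact bot_le
  | cons s la ih =>
      have hs := hla s (by simp)
      have hla' : ∀ u ∈ la, Set.OrdConnected u := fun u hu => hla u (by simp [hu])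
      rw [uList_cons,
        hfa s (uList la) (uList lb) (fui_ordConn hs) (fui_uList hla') (fui_uList hlb)]
      apply sup_le
      · exact keyC2 hb0 ha0 hfa hfb lb s hs hlb L hL
          ((Set.prod_mono_left Set.subset_union_left).trans hsub)
      · exact ih hla' ((Set.prod_mono_left Set.subset_union_right).trans hsub)

lemma keyC' {a b : Set ℝ} (fa : FinUnionIntervals a) (fb : FinUnionIntervals b)
    (L : List (Set ℝ × Set ℝ)) (hL : ∀ p ∈ L, p.1.OrdConnected ∧ p.2.OrdConnected)
    (hsub : a ×ˢ b ⊆ rList L) : f a b ≤ vList f L := by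
  obtain ⟨la, hla, rfl⟩ := fui_list fa
  obtain ⟨lb, hlb, rfl⟩ := fui_list fb
  exact keyC3 hb0 ha0 hfa hfb la lb hla hlb L hL hsub

lemma vList_mono {L M : List (Set ℝ × Set ℝ)}
    (hL : ∀ p ∈ L, p.1.OrdConnected ∧ p.2.OrdConnected)
    (hM : ∀ p ∈ M, p.1.OrdConnected ∧ p.2.OrdConnected)
    (h : rList L ⊆ rList M) : vList f L ≤ vList f M := by
  apply vList_le
  intro p hp
  have hsub : p.1 ×ˢ p.2 ⊆ rList L := fun z hz => mem_rList.mpr ⟨p, hp, hz⟩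
  exact keyC hb0 ha0 hfa hfb M hM p.1 p.2 (hL p hp).1 (hL p hp).2 (hsub.trans h)

lemma vList_eq {L M : List (Set ℝ × Set ℝ)}
    (hL : ∀ p ∈ L, p.1.OrdConnected ∧ p.2.OrdConnected)
    (hM : ∀ p ∈ M, p.1.OrdConnected ∧ p.2.OrdConnected)
    (h : rList L = rList M) : vList f L = vList f M :=
  le_antisymm (vList_mono hb0 ha0 hfa hfb hL hM h.le)
    (vList_mono hb0 ha0 hfa hfb hM hL h.ge)

end Rest

section CA2

lemma ca2_empty : CubicalArea2 (∅ : Set (ℝ × ℝ)) := ⟨∅, by simp, by simp⟩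

lemma ca2_union {S T : Set (ℝ × ℝ)} (hS : CubicalArea2 S) (hT : CubicalArea2 T) :
    CubicalArea2 (S ∪ T) := by
  classical
  obtain ⟨𝒮, h𝒮, hu⟩ := hS
  obtain ⟨𝒯, h𝒯, hv⟩ := hT
  refine ⟨𝒮 ∪ 𝒯, ?_, ?_⟩
  · intro C hC
    rcases Finset.mem_union.mp hC with h | h
    exacts [h𝒮 C h, h𝒯 C h]
  · rw [Finset.coe_union, Set.sUnion_union, hu, hv]

lemma ca2_prod {a b : Set ℝ} (ha : a.OrdConnected) (hb : b.OrdConnected) :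
    CubicalArea2 (a ×ˢ b) :=
  ⟨{a ×ˢ b}, by
    intro C hC
    rw [Finset.mem_singleton] at hC
    exact ⟨a, b, ha, hb, hC⟩, by simp⟩

lemma ca2_rList {L : List (Set ℝ × Set ℝ)}
    (hL : ∀ p ∈ L, p.1.OrdConnected ∧ p.2.OrdConnected) : CubicalArea2 (rList L) := by
  induction L with
  | nil => exact ca2_empty
  | cons p L ih =>
      rw [rList_cons]
      exact ca2_union (ca2_prod (hL p (by simp)).1 (hL p (by simp)).2)
        (ih fun q hq => hL q (by simp [hq]))

lemma ca2_list {S : Set (ℝ × ℝ)} (hS : CubicalArea2 S) :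
    ∃ L : List (Set ℝ × Set ℝ),
      (∀ p ∈ L, p.1.OrdConnected ∧ p.2.OrdConnected) ∧ rList L = S := by
  classical
  obtain ⟨𝒮, h1, h2⟩ := hS
  set g : Set (ℝ × ℝ) → Set ℝ × Set ℝ := fun C =>
    if h : ∃ a b : Set ℝ, a.OrdConnected ∧ b.OrdConnected ∧ C = a ×ˢ b then
      (h.choose, h.choose_spec.choose) else (∅, ∅) with hg
  have gspec : ∀ C, (∃ a b : Set ℝ, a.OrdConnected ∧ b.OrdConnected ∧ C = a ×ˢ b) →
      (g C).1.OrdConnected ∧ (g C).2.OrdConnected ∧ C = (g C).1 ×ˢ (g C).2 := by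
    intro C h
    rw [hg]
    simp only [dif_pos h]
    exact ⟨h.choose_spec.choose_spec.1, h.choose_spec.choose_spec.2.1,
      h.choose_spec.choose_spec.2.2⟩
  refine ⟨𝒮.toList.map g, ?_, ?_⟩
  · intro p hp
    obtain ⟨C, hC, rfl⟩ := List.mem_map.mp hp
    have := gspec C (h1 C (Finset.mem_toList.mp hC))
    exact ⟨this.1, this.2.1⟩
  · rw [← h2]
    ext x
    rw [mem_rList]
    simp only [List.mem_map, Set.mem_sUnion, Finset.mem_coe]
    constructor
    · rintro ⟨p, ⟨C, hC, rfl⟩, hx⟩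
      have hC' := Finset.mem_toList.mp hC
      refine ⟨C, hC', ?_⟩
      rw [(gspec C (h1 C hC')).2.2]
      exact hx
    · rintro ⟨C, hC, hx⟩
      refine ⟨g C, ⟨C, Finset.mem_toList.mpr hC, rfl⟩, ?_⟩
      rw [← (gspec C (h1 C hC)).2.2]
      exact hx

end CA2

lemma ca2_prod_int_list {s : Set ℝ} (hs : s.OrdConnected) (lb : List (Set ℝ))
    (hlb : ∀ t ∈ lb, Set.OrdConnected t) : CubicalArea2 (s ×ˢ uList lb) := by
  induction lb with
  | nil => rw [uList_nil, Set.prod_empty]; exact ca2_empty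
  | cons t lb ih =>
      rw [uList_cons, Set.prod_union]
      exact ca2_union (ca2_prod hs (hlb t (by simp))) (ih fun u hu => hlb u (by simp [hu]))

lemma ca2_prod_fui {a b : Set ℝ} (ha : FinUnionIntervals a) (hb : FinUnionIntervals b) :
    CubicalArea2 (a ×ˢ b) := by
  obtain ⟨la, hla, rfl⟩ := fui_list ha
  obtain ⟨lb, hlb, rfl⟩ := fui_list hb
  clear ha hb
  induction la with
  | nil => rw [uList_nil, Set.empty_prod]; exact ca2_empty
  | cons s la ih =>
      rw [uList_cons, Set.union_prod]
      exact ca2_union (ca2_prod_int_list (hla s (by simp)) lb hlb)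
        (ih fun u hu => hla u (by simp [hu]))

/-- `B_{ℝ²}`, with the bimorphism `(a, b) ↦ a × b`, satisfies the universal property
of the tensor product `B_ℝ ⊗ B_ℝ` in the category of semilattices with zero. -/
theorem stmt18 :
    (∀ a b : Set ℝ, FinUnionIntervals a → FinUnionIntervals b →
      CubicalArea2 (a ×ˢ b)) ∧
    ∀ (X : Type) (_ : SemilatticeSup X) (_ : OrderBot X) (f : Set ℝ → Set ℝ → X),
      (∀ b, FinUnionIntervals b → f ∅ b = ⊥) →
      (∀ a, FinUnionIntervals a → f a ∅ = ⊥) →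
      (∀ a a' b, FinUnionIntervals a → FinUnionIntervals a' →
        FinUnionIntervals b → f (a ∪ a') b = f a b ⊔ f a' b) →
      (∀ a b b', FinUnionIntervals a → FinUnionIntervals b →
        FinUnionIntervals b' → f a (b ∪ b') = f a b ⊔ f a b') →
      ∃! h : BA2 → X,
        (∀ S T : BA2, h (S ⊔ T) = h S ⊔ h T) ∧ h ⊥ = ⊥ ∧
        ∀ (a b : Set ℝ), FinUnionIntervals a → FinUnionIntervals b →
          ∀ (hab : CubicalArea2 (a ×ˢ b)), h ⟨a ×ˢ b, hab⟩ = f a b := by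
  constructor
  · exact fun a b ha hb => ca2_prod_fui ha hb
  intro X iS iB f
  letI := iS; letI := iB
  intro hb0 ha0 hfa hfb
  classical
  set hfun : BA2 → X := fun S => vList f (ca2_list S.2).choose with hhfun
  have hspec : ∀ S : BA2,
      (∀ p ∈ (ca2_list S.2).choose, p.1.OrdConnected ∧ p.2.OrdConnected) ∧
        rList (ca2_list S.2).choose = S.1 :=
    fun S => (ca2_list S.2).choose_spec
  have hval : ∀ (S : BA2) (L : List (Set ℝ × Set ℝ)),
      (∀ p ∈ L, p.1.OrdConnected ∧ p.2.OrdConnected) → rList L = S.1 →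
      hfun S = vList f L := by
    intro S L hL hr
    exact vList_eq hb0 ha0 hfa hfb (hspec S).1 hL ((hspec S).2.trans hr.symm)
  refine ⟨hfun, ⟨?_, ?_, ?_⟩, ?_⟩
  · -- preserves sup
    intro S T
    have h1 := hspec S
    have h2 := hspec T
    have key : hfun (S ⊔ T) = vList f ((ca2_list S.2).choose ++ (ca2_list T.2).choose) := by
      apply hval
      · intro p hp
        rcases List.mem_append.mp hp with h | h
        exacts [h1.1 p h, h2.1 p h]
      · rw [rList_append, h1.2, h2.2]; rfl
    rw [key, vList_append]
  · -- preserves bot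
    exact (hval ⊥ [] (by simp) rfl).trans vList_nil
  · -- on rectangles
    intro a b fa fb hab
    obtain ⟨L, hL, hrL⟩ := ca2_list hab
    rw [hval ⟨a ×ˢ b, hab⟩ L hL hrL]
    apply le_antisymm
    · apply vList_le
      intro p hp
      have hsub : p.1 ×ˢ p.2 ⊆ a ×ˢ b := by
        rw [← hrL]; exact fun z hz => mem_rList.mpr ⟨p, hp, hz⟩
      rcases Set.prod_subset_prod_iff.mp hsub with ⟨hs1, hs2⟩ | h | h
      · exact f_mono hfa hfb (fui_ordConn (hL p hp).1) fa (fui_ordConn (hL p hp).2) fb hs1 hs2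
      · rw [h, hb0 p.2 (fui_ordConn (hL p hp).2)]; exact bot_le
      · rw [h, ha0 p.1 (fui_ordConn (hL p hp).1)]; exact bot_le
    · exact keyC' hb0 ha0 hfa hfb fa fb L hL hrL.symm.subset
  · -- uniqueness
    rintro h' ⟨hsup, hbot, hprod⟩
    have huniq : ∀ L : List (Set ℝ × Set ℝ),
        (∀ p ∈ L, p.1.OrdConnected ∧ p.2.OrdConnected) →
        ∀ S : BA2, S.1 = rList L → h' S = vList f L := by
      intro L
      induction L with
      | nil =>
          intro _ S hS
          have hSb : S = ⊥ := Subtype.ext (by have h0 : S.1 = ∅ := (by simpa using hS); exact h0)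
          rw [hSb, hbot, vList_nil]
      | cons p L ih =>
          intro hG S hS
          have hc := (hG p (by simp)).1
          have hd := (hG p (by simp)).2
          have hT2 : CubicalArea2 (rList L) := ca2_rList fun q hq => hG q (by simp [hq])
          have hT1 : CubicalArea2 (p.1 ×ˢ p.2) := ca2_prod hc hd
          have hSeq : S = (@Max.max BA2 _ ⟨p.1 ×ˢ p.2, hT1⟩ ⟨rList L, hT2⟩) := Subtype.ext hS
          rw [hSeq]; refine (hsup _ _).trans ?_; rw [hprod p.1 p.2 (fui_ordConn hc) (fui_ordConn hd) hT1,
            ih (fun q hq => hG q (by simp [hq])) ⟨rList L, hT2⟩ rfl, vList_cons]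
    funext S
    rw [huniq (ca2_list S.2).choose (hspec S).1 S (hspec S).2.symm]
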